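/- Let T ∈ TQ (a lift of a twist torus diffeomorphism with the periodicity T(φ+1,I)=T(φ,I)+(1,0), T(φ,I+1)=T(φ,I)+(1,1)) and suppose z ∈ ℝ² has a rotation vector ρ(z,T) = lim (Tⁿ(z)−z)/n in (ℝ ∪ {±∞})². Then either ρ(z,T) = (ω, 0) for some ω ∈ ℝ, or ρ(z,T) = (±∞, ω) for some ω ∈ ℝ; in particular, it is impossible that both coordinates are finite with the second nonzero. -/
import Mathlib


open Filter

/-- A continuous doubly-periodic function on `ℝ²` is bounded. -/
private lemma per_bounded (f : ℝ × ℝ → ℝ) (hf : Continuous f)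
    (h1 : ∀ x y : ℝ, f (x + 1, y) = f (x, y))
    (h2 : ∀ x y : ℝ, f (x, y + 1) = f (x, y)) :
    ∃ C : ℝ, ∀ w : ℝ × ℝ, |f w| ≤ C := by
  have hint1 : ∀ (m : ℤ) (x y : ℝ), f (x + m, y) = f (x, y) := by
    intro m x y
    have hper : Function.Periodic (fun t : ℝ => f (t, y)) 1 := fun t => h1 t y
    have := (hper.int_mul m) x
    simpa using this
  have hint2 : ∀ (m : ℤ) (x y : ℝ), f (x, y + m) = f (x, y) := by
    intro m x y
    have hper : Function.Periodic (fun t : ℝ => f (x, t)) 1 := fun t => h2 x t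
    have := (hper.int_mul m) y
    simpa using this
  obtain ⟨C, hC⟩ := (isCompact_Icc.prod isCompact_Icc :
      IsCompact ((Set.Icc (0:ℝ) 1) ×ˢ (Set.Icc (0:ℝ) 1))).exists_bound_of_continuousOn
      hf.continuousOn
  refine ⟨C, fun w => ?_⟩
  have hw : f w = f (Int.fract w.1, Int.fract w.2) := by
    have e1 : f (Int.fract w.1 + (⌊w.1⌋ : ℤ), Int.fract w.2 + (⌊w.2⌋ : ℤ))
        = f (Int.fract w.1, Int.fract w.2) := by
      rw [hint2, hint1]
    rw [Int.fract_add_floor, Int.fract_add_floor] at e1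
    rw [← e1]
  have hmem : (Int.fract w.1, Int.fract w.2) ∈ (Set.Icc (0:ℝ) 1) ×ˢ (Set.Icc (0:ℝ) 1) :=
    ⟨⟨Int.fract_nonneg _, (Int.fract_lt_one _).le⟩,
     ⟨Int.fract_nonneg _, (Int.fract_lt_one _).le⟩⟩
  have := hC _ hmem
  rw [Real.norm_eq_abs] at this
  rw [hw]; exact this

private lemma steps_lb (φ : ℕ → ℝ) (n : ℕ) (s : ℝ)
    (h : ∀ k : ℕ, s ≤ φ (n + k + 1) - φ (n + k)) :
    ∀ k : ℕ, (k : ℝ) * s ≤ φ (n + k) - φ n := by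
  intro k
  induction k with
  | zero => simp
  | succ k ih =>
    have hk := h k
    have e : n + (k + 1) = n + k + 1 := rfl
    rw [e]
    push_cast
    linarith

private lemma quad_contra (b : ℕ → ℝ) (r : ℝ)
    (hb : Tendsto (fun n : ℕ => b n / n) atTop (nhds r))
    (A c : ℝ) (hc : 0 < c) (N : ℕ)
    (h : ∀ n : ℕ, N ≤ n → c * (n : ℝ)^2 - A * n ≤ |b (2*n) - b n|) : False := by
  obtain ⟨M, hM⟩ := (Metric.tendsto_atTop.1 hb) 1 one_pos
  have hbound : ∀ n : ℕ, max M 1 ≤ n → |b n| ≤ (|r| + 1) * n := by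
    intro n hn
    have hn1 : (1 : ℕ) ≤ n := le_trans (le_max_right _ _) hn
    have hnpos : (0 : ℝ) < n := by exact_mod_cast hn1
    have hd := hM n (le_trans (le_max_left _ _) hn)
    rw [Real.dist_eq] at hd
    have h1 : |b n / n| ≤ |r| + 1 := by
      have := abs_sub_abs_le_abs_sub (b n / n) r
      linarith [hd.le]
    have : |b n| = |b n / n| * n := by
      rw [abs_div, abs_of_pos hnpos, div_mul_cancel₀ _ (ne_of_gt hnpos)]
    rw [this]
    exact mul_le_mul_of_nonneg_right h1 hnpos.le
  obtain ⟨K, hK⟩ := exists_nat_ge ((3 * (|r| + 1) + |A| + 1) / c)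
  set n : ℕ := max (max K (max M 1)) N with hn_def
  have hnN : N ≤ n := le_max_right _ _
  have hnK : (K : ℝ) ≤ n := by exact_mod_cast le_trans (le_max_left _ _) (le_max_left _ _)
  have hnM1 : max M 1 ≤ n := le_trans (le_max_right _ _) (le_max_left _ _)
  have hn1 : (1 : ℝ) ≤ n := by
    have : (1:ℕ) ≤ n := le_trans (le_max_right _ _) hnM1
    exact_mod_cast this
  have hn2M1 : max M 1 ≤ 2 * n := le_trans hnM1 (by omega)
  have hb1 := hbound n hnM1
  have hb2 := hbound (2 * n) hn2M1
  have hcn : 3 * (|r| + 1) + |A| + 1 ≤ c * n := by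
    rw [div_le_iff₀ hc] at hK
    calc 3 * (|r| + 1) + |A| + 1 ≤ (K : ℝ) * c := hK
    _ ≤ (n : ℝ) * c := by nlinarith
    _ = c * n := by ring
  have key : (3 * (|r| + 1) + |A| + 1) * n ≤ c * (n:ℝ)^2 := by nlinarith
  have habs : |b (2*n) - b n| ≤ |b (2*n)| + |b n| := abs_sub _ _
  have hhn := h n hnN
  have hA : A ≤ |A| := le_abs_self A
  have hAn : A * n ≤ |A| * n := by nlinarith
  have hcast : ((2 * n : ℕ) : ℝ) = 2 * (n : ℝ) := by push_cast; ring
  rw [hcast] at hb2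
  nlinarith [abs_nonneg r]

/-- Dichotomy for rotation vectors of a twist lift `T ∈ TQ`: if the rotation
vector of `z` exists in `(ℝ ∪ {±∞})²`, then either it equals `(ω, 0)` with
`ω ∈ ℝ`, or it equals `(±∞, ω)` with `ω ∈ ℝ`. -/
theorem rotation_vector_dichotomy
    (T : ℝ × ℝ → ℝ × ℝ) (hT : Continuous T)
    (hper1 : ∀ z : ℝ × ℝ, T (z + (1, 0)) = T z + (1, 0))
    (hper2 : ∀ z : ℝ × ℝ, T (z + (0, 1)) = T z + (1, 1))
    (htwist : ∀ φ : ℝ, StrictMono fun I : ℝ => (T (φ, I)).1)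
    (z : ℝ × ℝ) (ρ₁ ρ₂ : EReal)
    (h1 : Tendsto (fun n : ℕ => ((((T^[n] z).1 - z.1) / (n : ℝ) : ℝ) : EReal))
            atTop (nhds ρ₁))
    (h2 : Tendsto (fun n : ℕ => ((((T^[n] z).2 - z.2) / (n : ℝ) : ℝ) : EReal))
            atTop (nhds ρ₂)) :
    (∃ ω : ℝ, ρ₁ = (ω : EReal) ∧ ρ₂ = 0) ∨
    (∃ ω : ℝ, (ρ₁ = ⊤ ∨ ρ₁ = ⊥) ∧ ρ₂ = (ω : EReal)) := by
  -- component form of the periodicity relations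
  have hp1 : ∀ x y : ℝ, T (x + 1, y) = ((T (x, y)).1 + 1, (T (x, y)).2) := by
    intro x y
    have h := hper1 (x, y)
    have e : (x, y) + ((1 : ℝ), (0 : ℝ)) = (x + 1, y) := by
      simp [Prod.ext_iff]
    rw [e] at h
    rw [h]
    simp [Prod.ext_iff]
  have hp2 : ∀ x y : ℝ, T (x, y + 1) = ((T (x, y)).1 + 1, (T (x, y)).2 + 1) := by
    intro x y
    have h := hper2 (x, y)
    have e : (x, y) + ((0 : ℝ), (1 : ℝ)) = (x, y + 1) := by
      simp [Prod.ext_iff]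
    rw [e] at h
    rw [h]
    simp [Prod.ext_iff]
  -- bounded "error" functions
  obtain ⟨Ch, hCh⟩ : ∃ C : ℝ, ∀ w : ℝ × ℝ, |(T w).1 - w.1 - w.2| ≤ C := by
    apply per_bounded (fun w => (T w).1 - w.1 - w.2) (by fun_prop)
    · intro x y; simp [hp1 x y]; try ring
    · intro x y; simp [hp2 x y]; try ring
  obtain ⟨Cg, hCg⟩ : ∃ C : ℝ, ∀ w : ℝ × ℝ, |(T w).2 - w.2| ≤ C := by
    apply per_bounded (fun w => (T w).2 - w.2) (by fun_prop)
    · intro x y; simp [hp1 x y]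
    · intro x y; simp [hp2 x y]
  set φ : ℕ → ℝ := fun n => (T^[n] z).1 with hφ_def
  set I : ℕ → ℝ := fun n => (T^[n] z).2 with hI_def
  have hφ0 : φ 0 = z.1 := by simp [hφ_def]
  have hI0 : I 0 = z.2 := by simp [hI_def]
  have hstepφ : ∀ m : ℕ, |φ (m + 1) - φ m - I m| ≤ Ch := by
    intro m
    have : T^[m + 1] z = T (T^[m] z) := Function.iterate_succ_apply' T m z
    simp only [hφ_def, hI_def, this]
    exact hCh (T^[m] z)
  have hstepI : ∀ m : ℕ, |I (m + 1) - I m| ≤ Cg := by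
    intro m
    have : T^[m + 1] z = T (T^[m] z) := Function.iterate_succ_apply' T m z
    simp only [hI_def, this]
    exact hCg (T^[m] z)
  -- `ρ₂` is finite
  have hItel : ∀ n : ℕ, |I n - z.2| ≤ (n : ℝ) * Cg := by
    intro n
    induction n with
    | zero => simp [hI0]
    | succ n ih =>
      have h := hstepI n
      have tri : |I (n + 1) - z.2| ≤ |I (n + 1) - I n| + |I n - z.2| := abs_sub_le _ _ _
      push_cast
      linarith
  have hρ₂top : ρ₂ ≤ (Cg : EReal) := by
    apply le_of_tendsto h2
    rw [eventually_atTop]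
    refine ⟨1, fun n hn => ?_⟩
    rw [EReal.coe_le_coe_iff]
    have hnpos : (0 : ℝ) < n := by exact_mod_cast hn
    rw [div_le_iff₀ hnpos]
    have := (abs_le.1 (hItel n)).2
    nlinarith
  have hρ₂bot : (-Cg : EReal) ≤ ρ₂ := by
    apply ge_of_tendsto h2
    rw [eventually_atTop]
    refine ⟨1, fun n hn => ?_⟩
    have : ((-Cg : ℝ) : EReal) ≤ (((I n - z.2) / n : ℝ) : EReal) := by
      rw [EReal.coe_le_coe_iff]
      have hnpos : (0 : ℝ) < n := by exact_mod_cast hn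
      rw [le_div_iff₀ hnpos]
      have := (abs_le.1 (hItel n)).1
      nlinarith
    exact_mod_cast this
  have hρ₂ne_top : ρ₂ ≠ ⊤ := fun h => by
    rw [h] at hρ₂top
    exact (EReal.coe_lt_top Cg).not_ge hρ₂top
  have hρ₂ne_bot : ρ₂ ≠ ⊥ := fun h => by
    rw [h] at hρ₂bot
    exact (EReal.bot_lt_coe (-Cg)).not_ge hρ₂bot
  lift ρ₂ to ℝ using ⟨hρ₂ne_top, hρ₂ne_bot⟩ with ω₂
  have h2r : Tendsto (fun n : ℕ => (I n - z.2) / n) atTop (nhds ω₂) :=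
    EReal.tendsto_coe.1 h2
  -- case on `ρ₁`
  by_cases hρ₁ : ρ₁ = ⊤ ∨ ρ₁ = ⊥
  · exact Or.inr ⟨ω₂, hρ₁, rfl⟩
  push_neg at hρ₁
  lift ρ₁ to ℝ using hρ₁ with r
  have h1r : Tendsto (fun n : ℕ => (φ n - z.1) / n) atTop (nhds r) :=
    EReal.tendsto_coe.1 h1
  left
  refine ⟨r, rfl, ?_⟩
  suffices hω : ω₂ = 0 by rw [hω]; rfl
  by_contra hω
  rcases lt_trichotomy ω₂ 0 with hneg | hzero | hpos
  · -- ω₂ < 0 : vertical coordinate goes to -∞ quadratically fast for φ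
    obtain ⟨N, hN⟩ := eventually_atTop.1 (h2r.eventually (eventually_le_nhds (by linarith : ω₂ < ω₂ / 2)))
    set N₁ : ℕ := max N 1 with hN₁_def
    refine quad_contra (fun n => φ n - z.1) r h1r (z.2 + Ch) (-ω₂/2) (by linarith) N₁ ?_
    intro n hn
    have hIub : ∀ m : ℕ, N₁ ≤ m → I m - z.2 ≤ (ω₂ / 2) * m := by
      intro m hm
      have hm1 : (1:ℕ) ≤ m := le_trans (le_max_right _ _) hm
      have hmpos : (0:ℝ) < m := by exact_mod_cast hm1
      have := hN m (le_trans (le_max_left _ _) hm)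
      rw [div_le_iff₀ hmpos] at this
      linarith
    have hstep : ∀ k : ℕ, (-(z.2 + Ch) - (ω₂/2) * n) ≤ (-φ (n + k + 1)) - (-φ (n + k)) := by
      intro k
      have h1 := hstepφ (n + k)
      have h2 := hIub (n + k) (le_trans hn (by omega))
      have hk : (ω₂ / 2) * ((n : ℝ) + k) ≤ (ω₂ / 2) * n := by nlinarith [Nat.cast_nonneg (α := ℝ) k]
      have hcast : ((n + k : ℕ) : ℝ) = (n : ℝ) + k := by push_cast; ring
      rw [hcast] at h2
      have := (abs_le.1 h1).2
      linarith
    have := steps_lb (fun m => -φ m) n _ hstep n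
    have h2n : n + n = 2 * n := by omega
    rw [h2n] at this
    have hlow : (-ω₂/2) * (n:ℝ)^2 - (z.2 + Ch) * n ≤ -(φ (2*n) - z.1) + (φ n - z.1) := by
      nlinarith
    calc (-ω₂/2) * (n:ℝ)^2 - (z.2 + Ch) * n
        ≤ -((φ (2*n) - z.1) - (φ n - z.1)) := by linarith
      _ ≤ |(φ (2*n) - z.1) - (φ n - z.1)| := neg_le_abs _
  · exact hω hzero
  · -- ω₂ > 0
    obtain ⟨N, hN⟩ := eventually_atTop.1 (h2r.eventually (eventually_ge_nhds (by linarith : ω₂ / 2 < ω₂)))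
    set N₁ : ℕ := max N 1 with hN₁_def
    refine quad_contra (fun n => φ n - z.1) r h1r (Ch - z.2) (ω₂/2) (by linarith) N₁ ?_
    intro n hn
    have hIlb : ∀ m : ℕ, N₁ ≤ m → (ω₂ / 2) * m ≤ I m - z.2 := by
      intro m hm
      have hm1 : (1:ℕ) ≤ m := le_trans (le_max_right _ _) hm
      have hmpos : (0:ℝ) < m := by exact_mod_cast hm1
      have := hN m (le_trans (le_max_left _ _) hm)
      rw [le_div_iff₀ hmpos] at this
      linarith
    have hstep : ∀ k : ℕ, ((z.2 - Ch) + (ω₂/2) * n) ≤ φ (n + k + 1) - φ (n + k) := by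
      intro k
      have h1 := hstepφ (n + k)
      have h2 := hIlb (n + k) (le_trans hn (by omega))
      have hk : (ω₂ / 2) * (n : ℝ) ≤ (ω₂ / 2) * ((n : ℝ) + k) := by nlinarith [Nat.cast_nonneg (α := ℝ) k]
      have hcast : ((n + k : ℕ) : ℝ) = (n : ℝ) + k := by push_cast; ring
      rw [hcast] at h2
      have := (abs_le.1 h1).1
      linarith
    have := steps_lb φ n _ hstep n
    have h2n : n + n = 2 * n := by omega
    rw [h2n] at this
    calc (ω₂/2) * (n:ℝ)^2 - (Ch - z.2) * n
        = (n : ℝ) * ((z.2 - Ch) + (ω₂/2) * n) := by ring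
      _ ≤ φ (2*n) - φ n := this
      _ = (φ (2*n) - z.1) - (φ n - z.1) := by ring
      _ ≤ |(φ (2*n) - z.1) - (φ n - z.1)| := le_abs_self _
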